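/- With the optimal twisting sequence ψ*, all twisted potentials are constant: g₁^{ψ*}(x) = ψ̃*₀ for all x, and g_t^{ψ*}(x) = 1 for all x and t ∈ {2,…,T}, where ψ̃*₀ = ∫ μ(x₁)ψ*₁(x₁)dx₁. -/
import Mathlib


open MeasureTheory Finset
open scoped ENNReal

/-- `condProd f g n t x` is the iterated (joint) integral
`E[∏_{p=t+1}^{t+n} g_p(X_p) | X_t = x]` for the Markov chain with transition density `f`
and potentials `g_p`, written as an integral over the path space `X^n`. For `n = 0` it
equals `1` (empty product, probability measure on the one-point path space). -/
noncomputable def condProd {d : ℕ} (f : (Fin d → ℝ) → (Fin d → ℝ) → ℝ)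
    (g : ℕ → (Fin d → ℝ) → ℝ) (n t : ℕ) (x : Fin d → ℝ) : ℝ :=
  ∫ z : Fin n → (Fin d → ℝ),
    ∏ p : Fin n,
      (f (if p.val = 0 then x
          else z ⟨p.val - 1, Nat.lt_of_le_of_lt (Nat.sub_le _ _) p.isLt⟩) (z p)
        * g (t + 1 + p.val) (z p))


namespace OptTwistAux

variable {d : ℕ}

/-- One factor of the path-space integrand. -/
noncomputable def pathTerm (f : (Fin d → ℝ) → (Fin d → ℝ) → ℝ) (g : ℕ → (Fin d → ℝ) → ℝ)
    (n t : ℕ) (x : Fin d → ℝ) (z : Fin n → (Fin d → ℝ)) (p : Fin n) : ℝ :=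
  f (if p.val = 0 then x
      else z ⟨p.val - 1, Nat.lt_of_le_of_lt (Nat.sub_le _ _) p.isLt⟩) (z p)
    * g (t + 1 + p.val) (z p)

/-- ENNReal version of the path integral. -/
noncomputable def pathL (f : (Fin d → ℝ) → (Fin d → ℝ) → ℝ) (g : ℕ → (Fin d → ℝ) → ℝ)
    (n t : ℕ) (x : Fin d → ℝ) : ℝ≥0∞ :=
  ∫⁻ z : Fin n → (Fin d → ℝ), ∏ p : Fin n, ENNReal.ofReal (pathTerm f g n t x z p)

variable {f : (Fin d → ℝ) → (Fin d → ℝ) → ℝ} {g : ℕ → (Fin d → ℝ) → ℝ}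

lemma pathTerm_nonneg (hf : ∀ x x', 0 ≤ f x x') (hg : ∀ t x, 0 ≤ g t x)
    (n t : ℕ) (x : Fin d → ℝ) (z : Fin n → (Fin d → ℝ)) (p : Fin n) :
    0 ≤ pathTerm f g n t x z p :=
  mul_nonneg (hf _ _) (hg _ _)

lemma measurable_pathTerm (hf : Measurable (Function.uncurry f))
    (hg : ∀ t, Measurable (g t)) (n t : ℕ) (p : Fin n) :
    Measurable (fun q : (Fin d → ℝ) × (Fin n → (Fin d → ℝ)) => pathTerm f g n t q.1 q.2 p) := by
  have ha : Measurable (fun q : (Fin d → ℝ) × (Fin n → (Fin d → ℝ)) =>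
      if p.val = 0 then q.1
      else q.2 ⟨p.val - 1, Nat.lt_of_le_of_lt (Nat.sub_le _ _) p.isLt⟩) := by
    split_ifs with h
    · exact measurable_fst
    · exact (measurable_pi_apply _).comp measurable_snd
  unfold pathTerm
  exact Measurable.mul (hf.comp (ha.prodMk
      ((measurable_pi_apply _).comp measurable_snd)))
    ((hg _).comp ((measurable_pi_apply _).comp measurable_snd))

lemma measurable_pathProd (hf : Measurable (Function.uncurry f))
    (hg : ∀ t, Measurable (g t)) (n t : ℕ) :
    Measurable (fun q : (Fin d → ℝ) × (Fin n → (Fin d → ℝ)) =>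
      ∏ p : Fin n, ENNReal.ofReal (pathTerm f g n t q.1 q.2 p)) :=
  Finset.measurable_prod _ fun p _ =>
    ENNReal.measurable_ofReal.comp (measurable_pathTerm hf hg n t p)

lemma measurable_pathL (hf : Measurable (Function.uncurry f))
    (hg : ∀ t, Measurable (g t)) (n t : ℕ) :
    Measurable (fun x => pathL f g n t x) := by
  unfold pathL
  exact Measurable.lintegral_prod_right' (measurable_pathProd hf hg n t)

lemma pathL_zero (t : ℕ) (x : Fin d → ℝ) : pathL f g 0 t x = 1 := by
  unfold pathL
  simp only [Finset.univ_eq_empty, Finset.prod_empty, lintegral_const, one_mul]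
  rw [MeasureTheory.volume_pi, Measure.pi_univ]
  simp

lemma pathTerm_cons_zero (n t : ℕ) (x y : Fin d → ℝ) (w : Fin n → (Fin d → ℝ)) :
    pathTerm f g (n + 1) t x (Fin.cons y w) 0 = f x y * g (t + 1) y := by
  simp [pathTerm]

lemma pathTerm_cons_succ (n t : ℕ) (x y : Fin d → ℝ) (w : Fin n → (Fin d → ℝ)) (j : Fin n) :
    pathTerm f g (n + 1) t x (Fin.cons y w) j.succ = pathTerm f g n (t + 1) y w j := by
  have hidx : (⟨(j.succ : Fin (n + 1)).val - 1,
      Nat.lt_of_le_of_lt (Nat.sub_le _ _) (j.succ).isLt⟩ : Fin (n + 1)) = Fin.castSucc j := by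
    apply Fin.ext; simp
  unfold pathTerm
  rw [if_neg (by simp : ¬ (j.succ : Fin (n + 1)).val = 0), hidx, Fin.cons_succ]
  congr 1
  · congr 1
    by_cases h : j.val = 0
    · rw [if_pos h, show Fin.castSucc j = 0 from Fin.ext (by simp [h]), Fin.cons_zero]
    · obtain ⟨k, hk⟩ := Nat.exists_eq_succ_of_ne_zero h
      rw [if_neg h, show Fin.castSucc j = Fin.succ ⟨k, by omega⟩ from Fin.ext (by simp [hk]),
        Fin.cons_succ]
      exact congrArg w (Fin.ext (by simp [hk]))
  · congr 1
    simp [Fin.val_succ]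
    omega

set_option maxHeartbeats 1000000 in
lemma pathL_succ (hf : Measurable (Function.uncurry f)) (hg : ∀ t, Measurable (g t))
    (n t : ℕ) (x : Fin d → ℝ) :
    pathL f g (n + 1) t x
      = ∫⁻ y, ENNReal.ofReal (f x y * g (t + 1) y) * pathL f g n (t + 1) y := by
  have hFm : Measurable (fun z : Fin (n + 1) → (Fin d → ℝ) =>
      ∏ p : Fin (n + 1), ENNReal.ofReal (pathTerm f g (n + 1) t x z p)) :=
    (measurable_pathProd hf hg (n + 1) t).comp (measurable_const.prodMk measurable_id)
  have mp := (MeasureTheory.volume_preserving_piFinSuccAbove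
    (fun _ : Fin (n + 1) => (Fin d → ℝ)) 0).symm
  unfold pathL
  rw [mp.lintegral_map_equiv (fun z : Fin (n + 1) → (Fin d → ℝ) =>
    ∏ p : Fin (n + 1), ENNReal.ofReal (pathTerm f g (n + 1) t x z p)) _]
  have hFm2 : Measurable (fun q : (Fin d → ℝ) × (Fin n → (Fin d → ℝ)) =>
      ∏ p : Fin (n + 1), ENNReal.ofReal (pathTerm f g (n + 1) t x
        ((MeasurableEquiv.piFinSuccAbove (fun _ : Fin (n + 1) => (Fin d → ℝ)) 0).symm q) p)) :=
    hFm.comp (MeasurableEquiv.measurable _)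
  rw [Measure.volume_eq_prod, MeasureTheory.lintegral_prod _ hFm2.aemeasurable]
  apply lintegral_congr
  intro y
  have hsymm : ∀ w : Fin n → (Fin d → ℝ),
      (MeasurableEquiv.piFinSuccAbove (fun _ : Fin (n + 1) => (Fin d → ℝ)) 0).symm (y, w)
        = Fin.cons y w := by
    intro w
    simp [MeasurableEquiv.piFinSuccAbove, Fin.insertNthEquiv, Fin.insertNth_zero']
  calc ∫⁻ w, (∏ p : Fin (n + 1), ENNReal.ofReal (pathTerm f g (n + 1) t x
        ((MeasurableEquiv.piFinSuccAbove (fun _ : Fin (n + 1) => (Fin d → ℝ)) 0).symm (y, w)) p))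
      = ∫⁻ w, ENNReal.ofReal (f x y * g (t + 1) y)
          * ∏ j : Fin n, ENNReal.ofReal (pathTerm f g n (t + 1) y w j) := by
        apply lintegral_congr
        intro w
        rw [hsymm w, Fin.prod_univ_succ, pathTerm_cons_zero]
        congr 1
        exact Finset.prod_congr rfl fun j _ => by rw [pathTerm_cons_succ]
    _ = ENNReal.ofReal (f x y * g (t + 1) y) * pathL f g n (t + 1) y := by
        rw [lintegral_const_mul' _ _ ENNReal.ofReal_ne_top]
        rfl

lemma integrable_f_section (hf_meas : Measurable (Function.uncurry f))
    (hf_int : ∀ x, ∫ x', f x x' = 1) (x : Fin d → ℝ) : Integrable (f x) := by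
  by_contra h
  have := hf_int x
  rw [integral_undef h] at this
  norm_num at this

lemma lintegral_ofReal_f (hf_nonneg : ∀ x x', 0 ≤ f x x')
    (hf_meas : Measurable (Function.uncurry f)) (hf_int : ∀ x, ∫ x', f x x' = 1)
    (x : Fin d → ℝ) : ∫⁻ y, ENNReal.ofReal (f x y) = 1 := by
  rw [← ofReal_integral_eq_lintegral_ofReal (integrable_f_section hf_meas hf_int x)
    (ae_of_all _ (hf_nonneg x)), hf_int x]
  simp

lemma pathL_bound (hf_nonneg : ∀ x x', 0 ≤ f x x') (hf_meas : Measurable (Function.uncurry f))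
    (hf_int : ∀ x, ∫ x', f x x' = 1) (hg_meas : ∀ t, Measurable (g t))
    (hg_bdd : ∀ t, ∃ B, ∀ x, g t x ≤ B) :
    ∀ n t, ∃ C : ℝ≥0∞, C ≠ ⊤ ∧ ∀ x, pathL f g n t x ≤ C := by
  intro n
  induction n with
  | zero => exact fun t => ⟨1, by simp, fun x => by rw [pathL_zero]⟩
  | succ n ih =>
    intro t
    obtain ⟨C, hC, hCle⟩ := ih (t + 1)
    obtain ⟨B, hB⟩ := hg_bdd (t + 1)
    refine ⟨ENNReal.ofReal B * C, ENNReal.mul_ne_top ENNReal.ofReal_ne_top hC, fun x => ?_⟩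
    rw [pathL_succ hf_meas hg_meas]
    calc ∫⁻ y, ENNReal.ofReal (f x y * g (t + 1) y) * pathL f g n (t + 1) y
        ≤ ∫⁻ y, ENNReal.ofReal (f x y) * (ENNReal.ofReal B * C) := by
          apply lintegral_mono
          intro y
          dsimp only
          rw [ENNReal.ofReal_mul (hf_nonneg x y), mul_assoc]
          gcongr
          · exact hB y
          · exact hCle y
      _ = ENNReal.ofReal B * C := by
          rw [lintegral_mul_const' _ _ (ENNReal.mul_ne_top ENNReal.ofReal_ne_top hC),
            lintegral_ofReal_f hf_nonneg hf_meas hf_int, one_mul]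

lemma pathL_ne_top (hf_nonneg : ∀ x x', 0 ≤ f x x') (hf_meas : Measurable (Function.uncurry f))
    (hf_int : ∀ x, ∫ x', f x x' = 1) (hg_meas : ∀ t, Measurable (g t))
    (hg_bdd : ∀ t, ∃ B, ∀ x, g t x ≤ B) (n t : ℕ) (x : Fin d → ℝ) :
    pathL f g n t x ≠ ⊤ := by
  obtain ⟨C, hC, hle⟩ := pathL_bound hf_nonneg hf_meas hf_int hg_meas hg_bdd n t
  exact ne_top_of_le_ne_top hC (hle x)

lemma condProd_eq_toReal (hf_nonneg : ∀ x x', 0 ≤ f x x')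
    (hf_meas : Measurable (Function.uncurry f)) (hg_meas : ∀ t, Measurable (g t))
    (hg_nonneg : ∀ t x, 0 ≤ g t x) (n t : ℕ) (x : Fin d → ℝ) :
    condProd f g n t x = (pathL f g n t x).toReal := by
  have hmeas : Measurable (fun z : Fin n → (Fin d → ℝ) => ∏ p : Fin n, pathTerm f g n t x z p) :=
    Finset.measurable_prod _ fun p _ =>
      (measurable_pathTerm hf_meas hg_meas n t p).comp (measurable_const.prodMk measurable_id)
  have hnn : ∀ z : Fin n → (Fin d → ℝ), 0 ≤ ∏ p : Fin n, pathTerm f g n t x z p := fun z =>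
    Finset.prod_nonneg fun p _ => pathTerm_nonneg hf_nonneg hg_nonneg n t x z p
  have h1 : condProd f g n t x = ∫ z : Fin n → (Fin d → ℝ), ∏ p : Fin n, pathTerm f g n t x z p :=
    rfl
  rw [h1, integral_eq_lintegral_of_nonneg_ae (ae_of_all _ hnn) hmeas.aestronglyMeasurable]
  unfold pathL
  congr 1
  apply lintegral_congr
  intro z
  exact ENNReal.ofReal_prod_of_nonneg
    (fun p _ => pathTerm_nonneg hf_nonneg hg_nonneg n t x z p)


lemma condProd_succ (hf_nonneg : ∀ x x', 0 ≤ f x x')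
    (hf_meas : Measurable (Function.uncurry f)) (hf_int : ∀ x, ∫ x', f x x' = 1)
    (hg_meas : ∀ t, Measurable (g t)) (hg_nonneg : ∀ t x, 0 ≤ g t x)
    (hg_bdd : ∀ t, ∃ B, ∀ x, g t x ≤ B) (n t : ℕ) (x : Fin d → ℝ) :
    condProd f g (n + 1) t x
      = ∫ y, f x y * (g (t + 1) y * condProd f g n (t + 1) y) := by
  have hLm : Measurable fun y => pathL f g n (t + 1) y :=
    measurable_pathL hf_meas hg_meas n (t + 1)
  have hne : ∀ y, pathL f g n (t + 1) y ≠ ⊤ :=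
    pathL_ne_top hf_nonneg hf_meas hf_int hg_meas hg_bdd n (t + 1)
  have hcp : ∀ y, condProd f g n (t + 1) y = (pathL f g n (t + 1) y).toReal :=
    condProd_eq_toReal hf_nonneg hf_meas hg_meas hg_nonneg n (t + 1)
  have hnn : ∀ y, 0 ≤ f x y * (g (t + 1) y * (pathL f g n (t + 1) y).toReal) := fun y =>
    mul_nonneg (hf_nonneg x y) (mul_nonneg (hg_nonneg _ y) ENNReal.toReal_nonneg)
  have hrm : Measurable fun y => f x y * (g (t + 1) y * (pathL f g n (t + 1) y).toReal) :=
    (hf_meas.comp measurable_prodMk_left).mul ((hg_meas _).mul hLm.ennreal_toReal)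
  simp_rw [hcp]
  rw [integral_eq_lintegral_of_nonneg_ae (ae_of_all _ hnn) hrm.aestronglyMeasurable,
    condProd_eq_toReal hf_nonneg hf_meas hg_meas hg_nonneg (n + 1) t,
    pathL_succ hf_meas hg_meas n t x]
  congr 1
  apply lintegral_congr
  intro y
  rw [ENNReal.ofReal_mul (hf_nonneg x y), ENNReal.ofReal_mul (hf_nonneg x y),
    ENNReal.ofReal_mul (hg_nonneg _ y), ENNReal.ofReal_toReal (hne y), mul_assoc]

end OptTwistAux

/-- with the optimal twisting sequence `ψ*` (times indexed `0,…,T-1`), all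
twisted potentials are constant: `g₀^{ψ*}(x) = ψ̃*₀ = ∫ μ ψ*₀` for all `x`, and
`g_t^{ψ*}(x) = 1` for all `x` and all `t ∈ {1,…,T-1}`. -/
theorem optimal_twisted_potentials_constant {d : ℕ} (T : ℕ) (hT : 0 < T)
    (μ : (Fin d → ℝ) → ℝ)
    (f : (Fin d → ℝ) → (Fin d → ℝ) → ℝ) (g : ℕ → (Fin d → ℝ) → ℝ)
    (hf_nonneg : ∀ x x', 0 ≤ f x x') (hf_meas : Measurable (Function.uncurry f))
    (hf_int : ∀ x, ∫ x', f x x' = 1)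
    (hg_meas : ∀ t, Measurable (g t)) (hg_nonneg : ∀ t x, 0 ≤ g t x)
    (hg_cont : ∀ t, Continuous (g t)) (hg_bdd : ∀ t, ∃ B, ∀ x, g t x ≤ B)
    (ψs ψts : ℕ → (Fin d → ℝ) → ℝ)
    (hψs : ∀ t, t < T → ∀ x, ψs t x = g t x * condProd f g (T - 1 - t) t x)
    (hψs_pos : ∀ t, t < T → ∀ x, 0 < ψs t x)
    (hψts : ∀ t, t + 1 < T → ∀ x, ψts t x = ∫ x', f x x' * ψs (t + 1) x')
    (hψts_last : ∀ x, ψts (T - 1) x = 1)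
    (ψt0s : ℝ) (hψt0s : ψt0s = ∫ x, μ x * ψs 0 x)
    (gψ : ℕ → (Fin d → ℝ) → ℝ)
    (hgψ0 : ∀ x, gψ 0 x = g 0 x * ψts 0 x * ψt0s / ψs 0 x)
    (hgψ : ∀ t, 1 ≤ t → ∀ x, gψ t x = g t x * ψts t x / ψs t x) :
    (∀ x, gψ 0 x = ψt0s) ∧ (∀ t, 1 ≤ t → t < T → ∀ x, gψ t x = 1) := by
  have key : ∀ t, t < T → ∀ x, ψts t x = condProd f g (T - 1 - t) t x := by
    intro t ht x
    by_cases h : t + 1 < T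
    · rw [hψts t h x]
      have hn : T - 1 - t = (T - 1 - (t + 1)) + 1 := by omega
      rw [hn, OptTwistAux.condProd_succ hf_nonneg hf_meas hf_int hg_meas hg_nonneg hg_bdd]
      refine integral_congr_ae (ae_of_all _ fun y => ?_)
      dsimp only
      rw [hψs (t + 1) h y]
    · have ht1 : t = T - 1 := by omega
      have h0 : T - 1 - t = 0 := by omega
      rw [h0, ht1, hψts_last x,
        OptTwistAux.condProd_eq_toReal hf_nonneg hf_meas hg_meas hg_nonneg 0 (T - 1) x,
        OptTwistAux.pathL_zero]
      simp
  have key2 : ∀ t, t < T → ∀ x, g t x * ψts t x = ψs t x := by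
    intro t ht x
    rw [key t ht x, ← hψs t ht x]
  refine ⟨fun x => ?_, fun t h1 ht x => ?_⟩
  · rw [hgψ0 x, key2 0 hT x, mul_comm, mul_div_assoc,
      div_self (ne_of_gt (hψs_pos 0 hT x)), mul_one]
  · rw [hgψ t h1 x, key2 t ht x, div_self (ne_of_gt (hψs_pos t ht x))]
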